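/- Asymptotic angle of the Lawlor neck: let n ≥ 1 and let a₁, …, aₙ be positive real numbers. Then Σ_{j=1}^n ∫_0^∞ a_j / ((1 + a_j t²) · √((∏_{k=1}^n (1 + a_k t²) − 1)/t²)) dt = π/2. -/

import Mathlib

open MeasureTheory Real Finset

/-- **Asymptotic angle of the Lawlor neck.** For positive reals `a₁, …, aₙ`,
`Σⱼ ∫₀^∞ aⱼ / ((1 + aⱼt²)·√((∏ₖ(1 + aₖt²) − 1)/t²)) dt = π/2`, each integral
being finite. -/
theorem lawlor_angle_sum {n : ℕ} (hn : 1 ≤ n) (a : Fin n → ℝ) (ha : ∀ j, 0 < a j) :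
    (∀ j : Fin n, IntegrableOn
      (fun t : ℝ => a j /
        ((1 + a j * t ^ 2) * Real.sqrt (((∏ k, (1 + a k * t ^ 2)) - 1) / t ^ 2)))
      (Set.Ioi 0)) ∧
    (∑ j : Fin n, ∫ t in Set.Ioi (0 : ℝ),
        a j / ((1 + a j * t ^ 2) *
          Real.sqrt (((∏ k, (1 + a k * t ^ 2)) - 1) / t ^ 2))) = π / 2 := by
  set P : ℝ → ℝ := fun t => ∏ k, (1 + a k * t ^ 2) with hPdef
  set F : ℝ → ℝ := fun t => Real.arctan (Real.sqrt (P t - 1)) with hFdef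
  set g : Fin n → ℝ → ℝ := fun j t =>
    a j / ((1 + a j * t ^ 2) * Real.sqrt ((P t - 1) / t ^ 2)) with hgdef
  have j0 : Fin n := ⟨0, hn⟩
  -- basic facts
  have hfac : ∀ (k : Fin n) (t : ℝ), (1:ℝ) ≤ 1 + a k * t ^ 2 := fun k t => by
    nlinarith [sq_nonneg t, (ha k).le]
  have hfacpos : ∀ (k : Fin n) (t : ℝ), (0:ℝ) < 1 + a k * t ^ 2 := fun k t =>
    lt_of_lt_of_le one_pos (hfac k t)
  have hPge : ∀ t : ℝ, 1 + a j0 * t ^ 2 ≤ P t := by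
    intro t
    have herase : (1:ℝ) ≤ ∏ k ∈ Finset.univ.erase j0, (1 + a k * t ^ 2) := by
      have := Finset.prod_le_prod (s := Finset.univ.erase j0) (f := fun _ => (1:ℝ))
        (g := fun k => 1 + a k * t ^ 2) (fun i _ => zero_le_one) (fun i _ => hfac i t)
      simpa using this
    have hmul : (∏ k ∈ Finset.univ.erase j0, (1 + a k * t ^ 2)) * (1 + a j0 * t ^ 2)
        = P t := Finset.prod_erase_mul _ _ (Finset.mem_univ j0)
    nlinarith [hfacpos j0 t]
  have hPgt : ∀ t : ℝ, 0 < t → 1 < P t := fun t ht =>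
    lt_of_lt_of_le (by nlinarith [mul_pos (ha j0) (pow_pos ht 2)]) (hPge t)
  have hPcont : Continuous P := by
    apply continuous_finset_prod
    intro k _
    continuity
  -- derivative
  have hderiv : ∀ t ∈ Set.Ioi (0:ℝ), HasDerivAt F (∑ j, g j t) t := by
    intro t ht
    have ht : (0:ℝ) < t := ht
    have h1 : 0 < P t - 1 := by linarith [hPgt t ht]
    set s := Real.sqrt (P t - 1) with hs
    have hspos : 0 < s := Real.sqrt_pos.2 h1
    have hs2 : s ^ 2 = P t - 1 := Real.sq_sqrt h1.le
    have hP' : HasDerivAt P (∑ j, (∏ k ∈ Finset.univ.erase j, (1 + a k * t ^ 2)) •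
        (a j * (2 * t))) t := by
      apply HasDerivAt.fun_finsetProd
      intro i _
      have : HasDerivAt (fun x : ℝ => 1 + a i * x ^ 2) (a i * (2 * t)) t := by
        simpa using ((hasDerivAt_pow 2 t).const_mul (a i)).const_add 1
      exact this
    have hsqrt : HasDerivAt (fun x : ℝ => Real.sqrt (P x - 1))
        (1 / (2 * s) * (∑ j, (∏ k ∈ Finset.univ.erase j, (1 + a k * t ^ 2)) •
          (a j * (2 * t)))) t :=
      (Real.hasDerivAt_sqrt (ne_of_gt h1)).comp t (hP'.sub_const 1)
    have hF : HasDerivAt F ((1 / (1 + s ^ 2)) * (1 / (2 * s) *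
        (∑ j, (∏ k ∈ Finset.univ.erase j, (1 + a k * t ^ 2)) • (a j * (2 * t))))) t :=
      (Real.hasDerivAt_arctan s).comp (h₂ := Real.arctan) t hsqrt
    convert hF using 1
    rw [hs2]
    have hsum : ∀ j : Fin n, g j t =
        (1 / (1 + (P t - 1))) * (1 / (2 * s) *
          ((∏ k ∈ Finset.univ.erase j, (1 + a k * t ^ 2)) • (a j * (2 * t)))) := by
      intro j
      have hprod : (∏ k ∈ Finset.univ.erase j, (1 + a k * t ^ 2)) * (1 + a j * t ^ 2)
          = P t := Finset.prod_erase_mul _ _ (Finset.mem_univ j)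
      have hsq : Real.sqrt ((P t - 1) / t ^ 2) = s / t := by
        rw [Real.sqrt_div h1.le, Real.sqrt_sq ht.le]
      have hPpos : 0 < P t := by linarith
      rw [hgdef]
      simp only
      rw [hsq]
      have hsne : s ≠ 0 := ne_of_gt hspos
      have hdne : (1 + a j * t ^ 2) ≠ 0 := ne_of_gt (hfacpos j t)
      simp only [smul_eq_mul]
      have h2 : 1 + (P t - 1) = P t := by ring
      rw [h2]
      field_simp
      have hc : ∏ x ∈ Finset.univ.erase j, (1 + t ^ 2 * a x)
          = ∏ k ∈ Finset.univ.erase j, (1 + a k * t ^ 2) :=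
        Finset.prod_congr rfl (fun k _ => by ring)
      rw [hc]
      linear_combination (-a j) * hprod
    rw [Finset.sum_congr rfl fun j _ => hsum j, ← Finset.mul_sum, ← Finset.mul_sum]
  -- nonnegativity
  have hg_nonneg : ∀ (j : Fin n), ∀ t ∈ Set.Ioi (0:ℝ), 0 ≤ g j t := by
    intro j t _
    apply div_nonneg (ha j).le
    exact mul_nonneg (le_of_lt (hfacpos j t)) (Real.sqrt_nonneg _)
  have hsum_nonneg : ∀ t ∈ Set.Ioi (0:ℝ), 0 ≤ ∑ j, g j t := fun t ht =>
    Finset.sum_nonneg fun j _ => hg_nonneg j t ht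
  -- limits
  have hFcont : Continuous F :=
    Real.continuous_arctan.comp (Real.continuous_sqrt.comp (hPcont.sub continuous_const))
  have hFtop : Filter.Tendsto F Filter.atTop (nhds (π / 2)) := by
    have h1 : Filter.Tendsto (fun t : ℝ => P t - 1) Filter.atTop Filter.atTop := by
      apply Filter.tendsto_atTop_mono (fun t => by linarith [hPge t] : ∀ t : ℝ,
        a j0 * t ^ 2 ≤ P t - 1)
      exact (Filter.tendsto_pow_atTop two_ne_zero).const_mul_atTop (ha j0)
    have hsqrt_top : Filter.Tendsto Real.sqrt Filter.atTop Filter.atTop := by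
      apply Filter.tendsto_atTop_atTop.2
      intro b
      refine ⟨b ^ 2, fun x hx => (le_abs_self b).trans ?_⟩
      rw [← Real.sqrt_sq_eq_abs]
      exact Real.sqrt_le_sqrt hx
    exact (Real.tendsto_arctan_atTop.mono_right nhdsWithin_le_nhds).comp
      (hsqrt_top.comp h1)
  have hF0 : F 0 = 0 := by
    simp [hFdef, hPdef]
  -- integrability of the sum
  have hint : IntegrableOn (fun t => ∑ j, g j t) (Set.Ioi 0) :=
    integrableOn_Ioi_deriv_of_nonneg hFcont.continuousWithinAt hderiv hsum_nonneg hFtop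
  -- integrability of each term
  have hmeas : ∀ j : Fin n, ContinuousOn (g j) (Set.Ioi 0) := by
    intro j
    apply ContinuousOn.div continuousOn_const
    · apply ContinuousOn.mul (by fun_prop)
      exact (Real.continuous_sqrt.comp_continuousOn
        (((hPcont.sub continuous_const).continuousOn).div (by fun_prop)
          (fun t ht => pow_ne_zero 2 (ne_of_gt ht))))
    · intro t ht
      have ht : (0:ℝ) < t := ht
      have h1 : 0 < P t - 1 := by linarith [hPgt t ht]
      have : 0 < Real.sqrt ((P t - 1) / t ^ 2) :=
        Real.sqrt_pos.2 (div_pos h1 (by positivity))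
      exact ne_of_gt (mul_pos (hfacpos j t) this)
  have hintj : ∀ j : Fin n, IntegrableOn (g j) (Set.Ioi 0) := by
    intro j
    apply hint.mono' ((hmeas j).aestronglyMeasurable measurableSet_Ioi)
    filter_upwards [ae_restrict_mem measurableSet_Ioi] with t ht
    rw [Real.norm_eq_abs, abs_of_nonneg (hg_nonneg j t ht)]
    exact Finset.single_le_sum (fun k _ => hg_nonneg k t ht) (Finset.mem_univ j)
  refine ⟨hintj, ?_⟩
  rw [← integral_finset_sum _ (fun j _ => hintj j),
    integral_Ioi_of_hasDerivAt_of_tendsto hFcont.continuousWithinAt hderiv hint hFtop, hF0,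
    sub_zero]
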